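/- Fix integers N ≥ 3 and M ≥ 3 and real coefficients f^c_{n,m}, f^s_{n,m}. Let F : ℝ × ℝ → ℝ be the partial-regularity DFS expansion, F(φ,θ) = Σ_{m=0}^{M} f_m^{c,N}(θ) cos(mφ) + Σ_{m=1}^{M} f_m^{s,N}(θ) sin(mφ), where f_0^{c,N}(θ) = Σ_{n=0}^{N} f^c_{n,0} cos(nθ); f_1^{c(s),N}(θ) = Σ_{n=0}^{N−1} f^{c(s)}_{n,1} sin(θ) cos(nθ); for even m ≥ 2, f_m^{c(s),N}(θ) = Σ_{n=1}^{N−1} f^{c(s)}_{n,m} sin(θ) sin(nθ); and for odd m ≥ 3, f_m^{c(s),N}(θ) = Σ_{n=1}^{N−2} f^{c(s)}_{n,m} sin²(θ) sin(nθ). Set C := Σ_{n=0}^{N−1} f^c_{n,1} and S := Σ_{n=0}^{N−1} f^s_{n,1}. Then for every φ ∈ ℝ, the limit as θ → 0⁺ of (1/sin θ) · ∂F/∂φ (φ, θ) exists and equals −C·sin(φ) + S·cos(φ). -/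

import Mathlib

open scoped BigOperators Real

noncomputable section

/-- The latitudinal component `f_m^{N}(θ)` of the partial-regularity DFS expansion,
built from coefficients `f n m`. -/
def dfsLat (N : ℕ) (f : ℕ → ℕ → ℝ) (m : ℕ) (θ : ℝ) : ℝ :=
  if m = 0 then ∑ n ∈ Finset.range (N + 1), f n 0 * Real.cos ((n : ℝ) * θ)
  else if m = 1 then ∑ n ∈ Finset.range N, f n 1 * (Real.sin θ * Real.cos ((n : ℝ) * θ))
  else if m % 2 = 0 then
    ∑ n ∈ Finset.Icc 1 (N - 1), f n m * (Real.sin θ * Real.sin ((n : ℝ) * θ))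
  else ∑ n ∈ Finset.Icc 1 (N - 2), f n m * (Real.sin θ ^ 2 * Real.sin ((n : ℝ) * θ))

/-- The partial-regularity DFS expansion
`F(φ,θ) = Σ_{m=0}^{M} f_m^{c,N}(θ) cos(mφ) + Σ_{m=1}^{M} f_m^{s,N}(θ) sin(mφ)`. -/
def dfsF (N M : ℕ) (fc fs : ℕ → ℕ → ℝ) (φ θ : ℝ) : ℝ :=
  ∑ m ∈ Finset.range (M + 1), dfsLat N fc m θ * Real.cos ((m : ℝ) * φ) +
    ∑ m ∈ Finset.Icc 1 M, dfsLat N fs m θ * Real.sin ((m : ℝ) * φ)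

end


lemma dfs_keyA (N : ℕ) (f : ℕ → ℕ → ℝ) (m : ℕ) (hm : 1 ≤ m) :
    Filter.Tendsto (fun θ : ℝ => (1 / Real.sin θ) * dfsLat N f m θ)
      (nhdsWithin 0 (Set.Ioi 0))
      (nhds (if m = 1 then ∑ n ∈ Finset.range N, f n 1 else 0)) := by
  have hev : ∀ᶠ θ : ℝ in nhdsWithin 0 (Set.Ioi 0), Real.sin θ ≠ 0 := by
    have h1 : ∀ᶠ θ : ℝ in nhdsWithin 0 (Set.Ioi 0), θ ∈ Set.Ioi (0:ℝ) :=
      eventually_mem_nhdsWithin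
    have h2 : ∀ᶠ θ : ℝ in nhdsWithin 0 (Set.Ioi 0), θ < Real.pi :=
      eventually_nhdsWithin_of_eventually_nhds
        (Filter.Tendsto.eventually_lt_const Real.pi_pos Filter.tendsto_id)
    filter_upwards [h1, h2] with θ hθ hθπ
    exact ne_of_gt (Real.sin_pos_of_pos_of_lt_pi hθ hθπ)
  rcases eq_or_lt_of_le hm with h1 | h2
  · -- m = 1
    subst h1
    rw [if_pos rfl]
    have heq : ∀ᶠ θ : ℝ in nhdsWithin 0 (Set.Ioi 0),
        ∑ n ∈ Finset.range N, f n 1 * Real.cos ((n : ℝ) * θ)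
          = (1 / Real.sin θ) * dfsLat N f 1 θ := by
      filter_upwards [hev] with θ hθ
      simp only [dfsLat]; norm_num
      rw [Finset.mul_sum]
      apply Finset.sum_congr rfl
      intro n _
      field_simp
    refine Filter.Tendsto.congr' heq ?_
    have hc : Continuous fun θ : ℝ => ∑ n ∈ Finset.range N, f n 1 * Real.cos ((n : ℝ) * θ) := by
      fun_prop
    have := (hc.tendsto 0).mono_left (nhdsWithin_le_nhds (s := Set.Ioi 0))
    simpa using this
  · have hm0 : m ≠ 0 := by omega
    have hm1 : m ≠ 1 := by omega
    rw [if_neg hm1]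
    by_cases hpar : m % 2 = 0
    · have heq : ∀ᶠ θ : ℝ in nhdsWithin 0 (Set.Ioi 0),
          ∑ n ∈ Finset.Icc 1 (N-1), f n m * Real.sin ((n : ℝ) * θ)
            = (1 / Real.sin θ) * dfsLat N f m θ := by
        filter_upwards [hev] with θ hθ
        simp only [dfsLat, if_neg hm0, if_neg hm1, if_pos hpar]
        rw [Finset.mul_sum]
        apply Finset.sum_congr rfl
        intro n _
        field_simp
      refine Filter.Tendsto.congr' heq ?_
      have hc : Continuous fun θ : ℝ => ∑ n ∈ Finset.Icc 1 (N-1), f n m * Real.sin ((n : ℝ) * θ) :=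
        by fun_prop
      have := (hc.tendsto 0).mono_left (nhdsWithin_le_nhds (s := Set.Ioi 0))
      simpa using this
    · have heq : ∀ᶠ θ : ℝ in nhdsWithin 0 (Set.Ioi 0),
          ∑ n ∈ Finset.Icc 1 (N-2), f n m * (Real.sin θ * Real.sin ((n : ℝ) * θ))
            = (1 / Real.sin θ) * dfsLat N f m θ := by
        filter_upwards [hev] with θ hθ
        simp only [dfsLat, if_neg hm0, if_neg hm1, if_neg hpar]
        rw [Finset.mul_sum]
        apply Finset.sum_congr rfl
        intro n _
        field_simp
      refine Filter.Tendsto.congr' heq ?_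
      have hc : Continuous fun θ : ℝ => ∑ n ∈ Finset.Icc 1 (N-2), f n m * (Real.sin θ * Real.sin ((n : ℝ) * θ)) :=
        by fun_prop
      have := (hc.tendsto 0).mono_left (nhdsWithin_le_nhds (s := Set.Ioi 0))
      simpa using this

lemma dfs_deriv (N M : ℕ) (fc fs : ℕ → ℕ → ℝ) (φ θ : ℝ) :
    deriv (fun φ' => dfsF N M fc fs φ' θ) φ =
      ∑ m ∈ Finset.range (M+1), dfsLat N fc m θ * ((m:ℝ) * -Real.sin ((m:ℝ)*φ)) +
      ∑ m ∈ Finset.Icc 1 M, dfsLat N fs m θ * ((m:ℝ) * Real.cos ((m:ℝ)*φ)) := by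
  have hcos : ∀ (c x : ℝ), HasDerivAt (fun y => Real.cos (c*y)) (c * -Real.sin (c*x)) x := by
    intro c x
    have := (Real.hasDerivAt_cos (c*x)).comp x ((hasDerivAt_id x).const_mul c)
    exact this.congr_deriv (by ring)
  have hsin : ∀ (c x : ℝ), HasDerivAt (fun y => Real.sin (c*y)) (c * Real.cos (c*x)) x := by
    intro c x
    have := (Real.hasDerivAt_sin (c*x)).comp x ((hasDerivAt_id x).const_mul c)
    exact this.congr_deriv (by ring)
  have h : HasDerivAt (fun φ' => dfsF N M fc fs φ' θ)
      (∑ m ∈ Finset.range (M+1), dfsLat N fc m θ * ((m:ℝ) * -Real.sin ((m:ℝ)*φ)) +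
       ∑ m ∈ Finset.Icc 1 M, dfsLat N fs m θ * ((m:ℝ) * Real.cos ((m:ℝ)*φ))) φ := by
    unfold dfsF
    apply HasDerivAt.add
    · exact HasDerivAt.fun_sum fun m _ => (hcos (m:ℝ) φ).const_mul _
    · exact HasDerivAt.fun_sum fun m _ => (hsin (m:ℝ) φ).const_mul _
  exact h.deriv

/-- The azimuthal gradient component `(1/sin θ) ∂F/∂φ` of the partial-regularity
DFS expansion has a limit as `θ → 0⁺`, equal to `−C·sin φ + S·cos φ` with
`C = Σ fc n 1` and `S = Σ fs n 1`. -/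
theorem dfsF_azimuthal_gradient_limit_at_pole
    (N M : ℕ) (hN : 3 ≤ N) (hM : 3 ≤ M) (fc fs : ℕ → ℕ → ℝ) :
    ∀ φ : ℝ,
      Filter.Tendsto
        (fun θ : ℝ => (1 / Real.sin θ) * deriv (fun φ' => dfsF N M fc fs φ' θ) φ)
        (nhdsWithin 0 (Set.Ioi 0))
        (nhds (-(∑ n ∈ Finset.range N, fc n 1) * Real.sin φ +
          (∑ n ∈ Finset.range N, fs n 1) * Real.cos φ)) := by
  intro φ
  have hrw : (fun θ : ℝ => (1 / Real.sin θ) * deriv (fun φ' => dfsF N M fc fs φ' θ) φ) =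
      fun θ : ℝ =>
        (∑ m ∈ Finset.range (M+1),
          ((1 / Real.sin θ) * dfsLat N fc m θ) * ((m:ℝ) * -Real.sin ((m:ℝ)*φ))) +
        (∑ m ∈ Finset.Icc 1 M,
          ((1 / Real.sin θ) * dfsLat N fs m θ) * ((m:ℝ) * Real.cos ((m:ℝ)*φ))) := by
    funext θ
    rw [dfs_deriv, mul_add, Finset.mul_sum, Finset.mul_sum]
    congr 1 <;> exact Finset.sum_congr rfl fun m _ => by ring
  rw [hrw]
  have hval : (-(∑ n ∈ Finset.range N, fc n 1) * Real.sin φ +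
      (∑ n ∈ Finset.range N, fs n 1) * Real.cos φ) =
      (∑ m ∈ Finset.range (M+1),
        (if m = 1 then ∑ n ∈ Finset.range N, fc n 1 else 0) * ((m:ℝ) * -Real.sin ((m:ℝ)*φ))) +
      (∑ m ∈ Finset.Icc 1 M,
        (if m = 1 then ∑ n ∈ Finset.range N, fs n 1 else 0) * ((m:ℝ) * Real.cos ((m:ℝ)*φ))) := by
    simp only [ite_mul, zero_mul, Finset.sum_ite_eq']
    have h1 : (1:ℕ) ∈ Finset.range (M+1) := by simp; omega
    have h2 : (1:ℕ) ∈ Finset.Icc 1 M := by simp; omega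
    rw [if_pos h1, if_pos h2]
    push_cast
    ring
  rw [hval]
  apply Filter.Tendsto.add <;> apply tendsto_finset_sum <;> intro m hm
  · by_cases h0 : m = 0
    · subst h0
      simp only [Nat.cast_zero, zero_mul, mul_zero]
      simp
    · exact (dfs_keyA N fc m (Nat.one_le_iff_ne_zero.mpr h0)).mul_const _
  · have hm1 : 1 ≤ m := (Finset.mem_Icc.mp hm).1
    exact (dfs_keyA N fs m hm1).mul_const _
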